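/- Pairwise angle between class-compositions: let D ≥ 2 and let p = exp(−√(D/(D−1))) / (1 + (D−1)·exp(−√(D/(D−1)))), so that each class-composition c^{(k)}(p) has Aitchison norm 1. Then for any two distinct classes k ≠ l in {1, …, D}, the Aitchison inner product satisfies ⟨c^{(k)}(p), c^{(l)}(p)⟩_A = −1/(D−1). (For D = 4 this gives the cosine −1/3, i.e. pairwise angles of ≈ 109.5°, the methane-molecule geometry; in particular, distinct class-compositions are never orthogonal.) -/

import Mathlib

open Real

/-- The Aitchison inner product of vectors `x, y ∈ ℝ^D` with strictly positive
entries: `⟨x, y⟩_A = (1/(2D)) Σ_i Σ_j log(x_i/x_j)·log(y_i/y_j)`. -/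
noncomputable def aitchisonInner (D : ℕ) (x y : Fin D → ℝ) : ℝ :=
  (1 / (2 * (D : ℝ))) *
    ∑ i : Fin D, ∑ j : Fin D, Real.log (x i / x j) * Real.log (y i / y j)

/-- The `k`-class-composition `c^{(k)}(p) ∈ ℝ^D`: its `k`-th entry is
`1 − (D−1)p` and all its other entries are `p`. -/
noncomputable def classComp (D : ℕ) (k : Fin D) (p : ℝ) : Fin D → ℝ :=
  fun i => if i = k then 1 - ((D : ℝ) - 1) * p else p

/-- The value `p* = exp(−√(D/(D−1))) / (1 + (D−1)·exp(−√(D/(D−1))))` making the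
class-compositions unit-norm. -/
noncomputable def pstar (D : ℕ) : ℝ :=
  Real.exp (-Real.sqrt ((D : ℝ) / ((D : ℝ) - 1))) /
    (1 + ((D : ℝ) - 1) * Real.exp (-Real.sqrt ((D : ℝ) / ((D : ℝ) - 1))))

/-- Pairwise angle between the unit-norm class-compositions: for distinct
classes `k ≠ l`, the Aitchison inner product of `c^{(k)}(p*)` and `c^{(l)}(p*)`
equals `−1/(D−1)`. -/
theorem aitchisonInner_classComp (D : ℕ) (hD : 2 ≤ D) (k l : Fin D) (hkl : k ≠ l) :
    aitchisonInner D (classComp D k (pstar D)) (classComp D l (pstar D))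
      = -1 / ((D : ℝ) - 1) := by
  set s := Real.sqrt ((D : ℝ) / ((D : ℝ) - 1)) with hs
  have hD1 : (1:ℝ) ≤ (D:ℝ) - 1 := by
    have : (2:ℝ) ≤ (D:ℝ) := by exact_mod_cast hD
    linarith
  have hDpos : (0:ℝ) < D := by linarith
  set E := Real.exp (-s) with hE
  have hEpos : 0 < E := Real.exp_pos _
  have hden : 0 < 1 + ((D:ℝ)-1) * E := by nlinarith
  have hp : pstar D = E / (1 + ((D:ℝ)-1)*E) := rfl
  have hppos : 0 < pstar D := by rw [hp]; positivity
  have hq : 1 - ((D:ℝ)-1) * pstar D = 1 / (1 + ((D:ℝ)-1)*E) := by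
    rw [hp]; field_simp; ring
  have hqpos : 0 < 1 - ((D:ℝ)-1) * pstar D := by rw [hq]; positivity
  have hlogp : Real.log (pstar D) = -s - Real.log (1 + ((D:ℝ)-1)*E) := by
    rw [hp, Real.log_div (ne_of_gt hEpos) (ne_of_gt hden), hE, Real.log_exp]
  have hlogq : Real.log (1 - ((D:ℝ)-1) * pstar D) = - Real.log (1 + ((D:ℝ)-1)*E) := by
    rw [hq, Real.log_div one_ne_zero (ne_of_gt hden), Real.log_one]; ring
  have key : ∀ (m : Fin D) (i j : Fin D),
      Real.log (classComp D m (pstar D) i / classComp D m (pstar D) j)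
        = s * ((if i = m then (1:ℝ) else 0) - (if j = m then (1:ℝ) else 0)) := by
    intro m i j
    simp only [classComp]
    by_cases hi : i = m <;> by_cases hj : j = m <;> simp only [hi, hj, if_pos, if_neg, if_true, ite_true, ite_false]
    · rw [div_self (ne_of_gt hqpos), Real.log_one]; simp
    · rw [Real.log_div (ne_of_gt hqpos) (ne_of_gt hppos), hlogq, hlogp]; ring
    · rw [Real.log_div (ne_of_gt hppos) (ne_of_gt hqpos), hlogq, hlogp]; ring
    · rw [div_self (ne_of_gt hppos), Real.log_one]; ring
  have ha : ∑ i : Fin D, (if i = k then (1:ℝ) else 0) = 1 := by simp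
  have hb : ∑ i : Fin D, (if i = l then (1:ℝ) else 0) = 1 := by simp
  have hab : ∑ i : Fin D, (if i = k then (1:ℝ) else 0) * (if i = l then (1:ℝ) else 0) = 0 := by
    apply Finset.sum_eq_zero
    intro i _
    by_cases h : i = k
    · subst h; rw [if_neg hkl, mul_zero]
    · rw [if_neg h, zero_mul]
  have hsum : ∑ i : Fin D, ∑ j : Fin D,
      Real.log (classComp D k (pstar D) i / classComp D k (pstar D) j) *
        Real.log (classComp D l (pstar D) i / classComp D l (pstar D) j) = -2 * s^2 := by
    have step : ∀ i : Fin D, ∑ j : Fin D,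
        Real.log (classComp D k (pstar D) i / classComp D k (pstar D) j) *
          Real.log (classComp D l (pstar D) i / classComp D l (pstar D) j)
        = s^2 * ((D:ℝ) * ((if i = k then (1:ℝ) else 0) * (if i = l then (1:ℝ) else 0))
            - (if i = k then (1:ℝ) else 0) - (if i = l then (1:ℝ) else 0)) := by
      intro i
      have : ∀ j : Fin D,
          Real.log (classComp D k (pstar D) i / classComp D k (pstar D) j) *
            Real.log (classComp D l (pstar D) i / classComp D l (pstar D) j)
          = s^2 * ((if i = k then (1:ℝ) else 0) * (if i = l then (1:ℝ) else 0)
              - (if i = k then (1:ℝ) else 0) * (if j = l then (1:ℝ) else 0)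
              - (if j = k then (1:ℝ) else 0) * (if i = l then (1:ℝ) else 0)
              + (if j = k then (1:ℝ) else 0) * (if j = l then (1:ℝ) else 0)) := by
        intro j; rw [key k i j, key l i j]; ring
      rw [Finset.sum_congr rfl (fun j _ => this j)]
      rw [← Finset.mul_sum]
      congr 1
      rw [Finset.sum_add_distrib, Finset.sum_sub_distrib, Finset.sum_sub_distrib,
        Finset.sum_const, ← Finset.mul_sum, ← Finset.sum_mul, ha, hb, hab]
      simp [Finset.card_univ]
    rw [Finset.sum_congr rfl (fun i _ => step i)]
    rw [← Finset.mul_sum, Finset.sum_sub_distrib, Finset.sum_sub_distrib,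
      ← Finset.mul_sum, hab, ha, hb]
    ring
  have hs2 : s^2 = (D:ℝ) / ((D:ℝ) - 1) := Real.sq_sqrt (by positivity)
  rw [aitchisonInner, hsum, hs2]
  field_simp
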